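/- Chebyshev growth bound from the iteration count. Let w ∈ (0,1) and δ ∈ (0,1), set γ = √(1−w²), and let L be a positive integer with L ≥ ln(2/δ)/w. Then T_L(1/γ) ≥ 1/δ, where T_L is the Chebyshev polynomial of the first kind of degree L. -/

import Mathlib

open Real

lemma T_real_cosh (t : ℝ) (n : ℤ) :
    (Polynomial.Chebyshev.T ℝ n).eval (Real.cosh t) = Real.cosh (n * t) := by
  have h := Polynomial.Chebyshev.T_complex_cos (t * Complex.I) n
  have h1 : Complex.cos (↑t * Complex.I) = (Real.cosh t : ℂ) := by
    rw [Complex.cos_mul_I, Complex.ofReal_cosh]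
  have h2 : Complex.cos (↑n * (↑t * Complex.I)) = (Real.cosh (n * t) : ℂ) := by
    rw [← mul_assoc, ← Complex.ofReal_intCast, ← Complex.ofReal_mul, Complex.cos_mul_I,
      Complex.ofReal_cosh]
  rw [h1, h2] at h
  exact_mod_cast h

/-- `2w ≤ log(1+w) - log(1-w)` for `0 ≤ w < 1`. -/
lemma two_mul_le_log_div (w : ℝ) (hw0 : 0 ≤ w) (hw1 : w < 1) :
    2 * w ≤ Real.log (1 + w) - Real.log (1 - w) := by
  set f : ℝ → ℝ := fun x => Real.log (1 + x) - Real.log (1 - x) - 2 * x with hf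
  have hderiv : ∀ x ∈ Set.Ico (0:ℝ) 1,
      HasDerivAt f (1 / (1 + x) + 1 / (1 - x) - 2) x := by
    intro x hx
    have h1 : (0:ℝ) < 1 + x := by linarith [hx.1]
    have h2 : (0:ℝ) < 1 - x := by linarith [hx.2]
    have d1 : HasDerivAt (fun x : ℝ => Real.log (1 + x)) (1 / (1 + x)) x := by
      have := (Real.hasDerivAt_log h1.ne').comp x ((hasDerivAt_id x).const_add 1)
      simpa [one_div, Function.comp_def] using this
    have d2 : HasDerivAt (fun x : ℝ => Real.log (1 - x)) (-(1 / (1 - x))) x := by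
      have := (Real.hasDerivAt_log h2.ne').comp x ((hasDerivAt_id x).neg.const_add 1)
      simpa [one_div, Function.comp_def] using this
    have d3 : HasDerivAt (fun x : ℝ => (2:ℝ) * x) 2 x := by
      simpa using (hasDerivAt_id x).const_mul (2:ℝ)
    have := (d1.sub d2).sub d3
    have e : (1 / (1 + x) + 1 / (1 - x) - 2) = (1 / (1 + x) - -(1 / (1 - x)) - 2) := by ring
    rw [e]
    exact this
  have hmono : MonotoneOn f (Set.Icc 0 w) := by
    apply monotoneOn_of_deriv_nonneg (convex_Icc 0 w)
    · apply ContinuousOn.sub (ContinuousOn.sub ?_ ?_) (by fun_prop)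
      · apply (Real.continuousOn_log.comp (by fun_prop))
        intro x hx
        have : (0:ℝ) < 1 + x := by simp at hx ⊢; linarith [hx.1]
        simp [this.ne']
      · apply (Real.continuousOn_log.comp (by fun_prop))
        intro x hx
        have : (0:ℝ) < 1 - x := by simp at hx ⊢; linarith [hx.2]
        simp [this.ne']
    · intro x hx
      rw [interior_Icc] at hx
      exact (hderiv x ⟨le_of_lt hx.1, hx.2.trans hw1⟩).differentiableAt.differentiableWithinAt
    · intro x hx
      rw [interior_Icc] at hx
      have hx' : x ∈ Set.Ico (0:ℝ) 1 := ⟨le_of_lt hx.1, hx.2.trans hw1⟩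
      rw [(hderiv x hx').deriv]
      have h1 : (0:ℝ) < 1 + x := by linarith [hx'.1]
      have h2 : (0:ℝ) < 1 - x := by linarith [hx'.2]
      rw [div_add_div _ _ h1.ne' h2.ne', sub_nonneg, le_div_iff₀ (by positivity)]
      nlinarith [sq_nonneg x]
  have h0 : f 0 ≤ f w := hmono ⟨le_refl 0, hw0⟩ ⟨hw0, le_refl w⟩ hw0
  simp only [hf, Real.log_one, add_zero, sub_zero, mul_zero] at h0
  linarith [h0]

/-- Chebyshev growth bound from the iteration count:
if `L ≥ ln(2/δ)/w` then `T_L(1/√(1−w²)) ≥ 1/δ`. -/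
theorem chebyshev_growth_bound
    (w δ : ℝ) (hw : w ∈ Set.Ioo (0 : ℝ) 1) (hδ : δ ∈ Set.Ioo (0 : ℝ) 1)
    (L : ℕ) (hL : 0 < L) (hLge : (L : ℝ) ≥ Real.log (2 / δ) / w) :
    (Polynomial.Chebyshev.T ℝ L).eval (1 / Real.sqrt (1 - w ^ 2)) ≥ 1 / δ := by
  obtain ⟨hw0, hw1⟩ := hw
  obtain ⟨hδ0, hδ1⟩ := hδ
  have h1w : (0:ℝ) < 1 + w := by linarith
  have h2w : (0:ℝ) < 1 - w := by linarith
  set t : ℝ := (Real.log (1 + w) - Real.log (1 - w)) / 2 with ht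
  set b : ℝ := Real.sqrt (1 + w) with hb
  set c : ℝ := Real.sqrt (1 - w) with hc
  have hbpos : 0 < b := Real.sqrt_pos.2 h1w
  have hcpos : 0 < c := Real.sqrt_pos.2 h2w
  have hb2 : b ^ 2 = 1 + w := Real.sq_sqrt h1w.le
  have hc2 : c ^ 2 = 1 - w := Real.sq_sqrt h2w.le
  have hbc : b * c = Real.sqrt (1 - w ^ 2) := by
    rw [hb, hc, ← Real.sqrt_mul h1w.le]; ring_nf
  -- exp t = b / c
  have hexpt : Real.exp t = b / c := by
    have : t = Real.log (b / c) := by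
      rw [Real.log_div hbpos.ne' hcpos.ne', hb, hc,
        Real.log_sqrt h1w.le, Real.log_sqrt h2w.le, ht]
      ring
    rw [this, Real.exp_log (by positivity)]
  -- cosh t = 1/√(1-w²)
  have hcosht : Real.cosh t = 1 / Real.sqrt (1 - w ^ 2) := by
    rw [Real.cosh_eq, hexpt, Real.exp_neg, hexpt, ← hbc]
    field_simp
    linear_combination hb2 + hc2
  -- t ≥ w
  have htw : w ≤ t := by
    have := two_mul_le_log_div w hw0.le hw1
    rw [ht]; linarith
  have htpos : 0 < t := lt_of_lt_of_le hw0 htw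
  -- main computation
  have heval : (Polynomial.Chebyshev.T ℝ L).eval (1 / Real.sqrt (1 - w ^ 2))
      = Real.cosh (L * t) := by
    rw [← hcosht]
    have := T_real_cosh t (L : ℤ)
    simpa using this
  rw [heval]
  have hLt : Real.log (2 / δ) ≤ (L : ℝ) * t := by
    have h1 : Real.log (2 / δ) ≤ (L : ℝ) * w := by
      rw [ge_iff_le, div_le_iff₀ hw0] at hLge; linarith
    have h2 : (L : ℝ) * w ≤ (L : ℝ) * t :=
      mul_le_mul_of_nonneg_left htw (Nat.cast_nonneg L)
    linarith
  have hexp : 2 / δ ≤ Real.exp ((L : ℝ) * t) := by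
    calc 2 / δ = Real.exp (Real.log (2 / δ)) := by
          rw [Real.exp_log (by positivity)]
      _ ≤ Real.exp ((L : ℝ) * t) := Real.exp_le_exp.2 hLt
  have : Real.exp ((L : ℝ) * t) / 2 ≤ Real.cosh ((L : ℝ) * t) := by
    rw [Real.cosh_eq]
    have := Real.exp_pos (-((L : ℝ) * t))
    linarith
  calc (1:ℝ) / δ = (2 / δ) / 2 := by ring
    _ ≤ Real.exp ((L : ℝ) * t) / 2 := by linarith
    _ ≤ Real.cosh ((L : ℝ) * t) := this
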